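/- The L vectors E₂₁^{(l)}φ, l = 1,…,L, are linearly independent, where φ = (|0…0⟩+|1…1⟩) + Σ_{l=2}^{L} (|0…0⟩ with qubits 1 and l excited + its global bit-flip), L ≥ 5, and E₂₁^{(l)} applies the lowering matrix E₂₁ = [[0,0],[1,0]] to the l-th qubit and identity elsewhere. -/

import Mathlib

open Matrix BigOperators

/-- Operator acting as the 2×2 matrix `A` on the `l`-th qubit and as identity elsewhere. -/
noncomputable def tensorFactorOp (L : ℕ) (A : Matrix (Fin 2) (Fin 2) ℂ) (l : Fin L) :
    Matrix (Fin L → Fin 2) (Fin L → Fin 2) ℂ :=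
  fun s t => A (s l) (t l) * (if ∀ m, m ≠ l → s m = t m then 1 else 0)

/-- The lowering matrix `E₂₁ = [[0,0],[1,0]]`. -/
def E21 : Matrix (Fin 2) (Fin 2) ℂ := Matrix.of ![![0, 0], ![1, 0]]

/-- Basis state with qubits `1` and `l` excited and all others in the ground state. -/
def uPat (L : ℕ) [NeZero L] (l : Fin L) : Fin L → Fin 2 :=
  fun m => if m = 0 ∨ m = l then 1 else 0

/-- The stable state
`φ = (|0…0⟩+|1…1⟩) + Σ_{l=2}^{L} (|1 0…0 1_l 0…0⟩ + |0 1…1 0_l 1…1⟩)`. -/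
noncomputable def stablePhi (L : ℕ) [NeZero L] : (Fin L → Fin 2) → ℂ :=
  fun s => (if s = (fun _ => 0) then 1 else 0) + (if s = (fun _ => 1) then 1 else 0)
    + ∑ l ∈ Finset.univ.erase 0,
        ((if s = uPat L l then 1 else 0)
          + (if s = (fun m => 1 - uPat L l m) then 1 else 0))

/-- Basis state with a single excitation at position `l`. -/
def eVec (L : ℕ) [NeZero L] (l : Fin L) : Fin L → Fin 2 :=
  fun k => if k = l then 1 else 0

lemma exists_third {L : ℕ} [NeZero L] (hL : 3 ≤ L) (l : Fin L) :
    ∃ m : Fin L, m ≠ 0 ∧ m ≠ l := by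
  by_contra h
  push_neg at h
  have hsub : (Finset.univ : Finset (Fin L)) ⊆ {0, l} := by
    intro m _
    by_cases hm : m = 0
    · simp [hm]
    · simp [h m hm]
  have := Finset.card_le_card hsub
  have hcard : ({0, l} : Finset (Fin L)).card ≤ 2 :=
    Finset.card_insert_le _ _ |>.trans (by simp)
  simp [Finset.card_univ] at this
  omega

lemma phi_zero {L : ℕ} [NeZero L] (hL : 3 ≤ L) :
    stablePhi L (fun _ => 0) = 1 := by
  unfold stablePhi
  have h1 : (fun _ : Fin L => (0 : Fin 2)) ≠ (fun _ => 1) := by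
    intro h
    exact absurd (congrFun h 0) (by decide)
  rw [if_pos rfl, if_neg h1]
  have hz : ∀ l ∈ Finset.univ.erase (0 : Fin L),
      ((if (fun _ : Fin L => (0 : Fin 2)) = uPat L l then (1 : ℂ) else 0)
        + (if (fun _ : Fin L => (0 : Fin 2)) = (fun m => 1 - uPat L l m) then 1 else 0)) = 0 := by
    intro l hl
    obtain ⟨m, hm0, hml⟩ := exists_third hL l
    rw [if_neg, if_neg]
    · ring
    · intro h
      have := congrFun h m
      simp [uPat, hm0, hml] at this
    · intro h
      have := congrFun h 0
      simp [uPat] at this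
  rw [Finset.sum_eq_zero hz]
  ring

lemma E21_zero (j : Fin 2) : E21 0 j = 0 := by
  fin_cases j <;> simp [E21]

lemma psi_apply {L : ℕ} [NeZero L] (hL : 3 ≤ L) (m l : Fin L) :
    (tensorFactorOp L E21 m).mulVec (stablePhi L) (eVec L l)
      = if m = l then 1 else 0 := by
  unfold Matrix.mulVec tensorFactorOp dotProduct
  by_cases hml : m = l
  · subst hml
    rw [if_pos rfl]
    rw [Fintype.sum_eq_single (fun _ : Fin L => (0 : Fin 2))]
    · have h1 : eVec L m m = 1 := by simp [eVec]
      have h2 : (∀ k, k ≠ m → eVec L m k = (fun _ : Fin L => (0 : Fin 2)) k) := by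
        intro k hk
        simp [eVec, hk]
      beta_reduce
      rw [h1, if_pos h2, phi_zero hL]
      simp [E21]
    · intro t ht
      by_cases h0 : t m = 0
      · have hcond : ¬ ∀ k, k ≠ m → eVec L m k = t k := by
          intro hall
          apply ht
          funext k
          by_cases hk : k = m
          · subst hk; exact h0
          · rw [← hall k hk]; simp [eVec, hk]
        beta_reduce
        rw [if_neg hcond]
        ring
      · have h1 : t m = 1 := by omega
        have hE : eVec L m m = 1 := by simp [eVec]
        beta_reduce
        rw [hE, h1]
        have : E21 1 1 = 0 := by simp [E21]
        rw [this]
        ring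
  · rw [if_neg hml]
    apply Finset.sum_eq_zero
    intro t _
    have hE : eVec L l m = 0 := by simp [eVec, hml]
    beta_reduce
    rw [hE, E21_zero]
    ring

/-- For `L ≥ 5` the `L` vectors `E₂₁^{(l)}φ` are linearly independent. -/
theorem stmt11 (L : ℕ) [NeZero L] (hL : 5 ≤ L) :
    LinearIndependent ℂ
      (fun l : Fin L => (tensorFactorOp L E21 l).mulVec (stablePhi L)) := by
  have h3 : 3 ≤ L := by omega
  rw [Fintype.linearIndependent_iff]
  intro g hg l
  have h := congrFun hg (eVec L l)
  simp only [Finset.sum_apply, Pi.smul_apply, smul_eq_mul, Pi.zero_apply] at h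
  have key : ∀ i : Fin L,
      (tensorFactorOp L E21 i).mulVec (stablePhi L) (eVec L l)
        = if i = l then 1 else 0 := fun i => psi_apply h3 i l
  simp only [key, mul_ite, mul_one, mul_zero, Finset.sum_ite_eq'] at h
  simpa using h
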